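/- For the 3×3 matrix H = [[0,1,0],[1,ζ,1],[0,1,0]] with ζ real, the eigenvalues are 0, ζ/2 - √(ζ²+8)/2, and ζ/2 + √(ζ²+8)/2, and with p_max defined via its orthonormal eigenvectors as p_max(i,j) = (Σ_k |⟨e_i,v_k⟩⟨v_k,e_j⟩|)², one has p_max(1,3) = 1 for all ζ and p_max(1,2) → 0 as ζ → ∞. -/
import Mathlib


/-- Single-excitation Hamiltonian of a 3-spin XX chain with bias ζ on the central spin. -/
def H3 (ζ : ℝ) : Matrix (Fin 3) (Fin 3) ℝ :=
  Matrix.of ![![0, 1, 0], ![1, ζ, 1], ![0, 1, 0]]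

/-- The three eigenvalues of `H3 ζ`. -/
noncomputable def mu3 (ζ : ℝ) : Fin 3 → ℝ :=
  ![ζ / 2 - Real.sqrt (ζ ^ 2 + 8) / 2, 0, ζ / 2 + Real.sqrt (ζ ^ 2 + 8) / 2]

theorem biased_three_chain
    (v : ℝ → Fin 3 → Fin 3 → ℝ)
    (horth : ∀ ζ, ∀ k l : Fin 3,
      ∑ x : Fin 3, v ζ k x * v ζ l x = if k = l then 1 else 0)
    (heig : ∀ ζ, ∀ k : Fin 3, (H3 ζ).mulVec (v ζ k) = mu3 ζ k • v ζ k)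
    (pmax : ℝ → Fin 3 → Fin 3 → ℝ)
    (hpmax : ∀ ζ i j, pmax ζ i j = (∑ k : Fin 3, |v ζ k i * v ζ k j|) ^ 2) :
    (∀ ζ lam : ℝ,
        (lam • (1 : Matrix (Fin 3) (Fin 3) ℝ) - H3 ζ).det
          = (lam - mu3 ζ 0) * (lam - mu3 ζ 1) * (lam - mu3 ζ 2)) ∧
    (∀ ζ, pmax ζ 0 2 = 1) ∧
    Filter.Tendsto (fun ζ => pmax ζ 0 1) Filter.atTop (nhds 0) := by
  have hs2 : ∀ ζ : ℝ, Real.sqrt (ζ ^ 2 + 8) ^ 2 = ζ ^ 2 + 8 :=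
    fun ζ => Real.sq_sqrt (by positivity)
  have hsnn : ∀ ζ : ℝ, 0 ≤ Real.sqrt (ζ ^ 2 + 8) := fun ζ => Real.sqrt_nonneg _
  -- eigen equations componentwise
  have hE : ∀ ζ, ∀ k : Fin 3,
      v ζ k 1 = mu3 ζ k * v ζ k 0 ∧
      v ζ k 0 + ζ * v ζ k 1 + v ζ k 2 = mu3 ζ k * v ζ k 1 ∧
      v ζ k 1 = mu3 ζ k * v ζ k 2 := by
    intro ζ k
    have h0 := congrFun (heig ζ k) 0
    have h1 := congrFun (heig ζ k) 1
    have h2 := congrFun (heig ζ k) 2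
    simp [H3, Matrix.mulVec, dotProduct, Fin.sum_univ_three, Pi.smul_apply,
      smul_eq_mul] at h0 h1 h2
    exact ⟨h0, by linarith, h2⟩
  have hmu0ne : ∀ ζ : ℝ, mu3 ζ 0 ≠ 0 := by
    intro ζ h
    have := hs2 ζ
    simp [mu3] at h
    nlinarith [hsnn ζ]
  have hmu2ne : ∀ ζ : ℝ, mu3 ζ 2 ≠ 0 := by
    intro ζ h
    have := hs2 ζ
    simp [mu3] at h
    nlinarith [hsnn ζ]
  have hmid : ∀ ζ, v ζ 1 1 = 0 := by
    intro ζ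
    have := (hE ζ 1).1
    simpa [mu3] using this
  -- v k 0 = v k 2 for k = 0, 2
  have heq0 : ∀ ζ, v ζ 0 0 = v ζ 0 2 := by
    intro ζ
    have h1 := (hE ζ 0).1
    have h2 := (hE ζ 0).2.2
    exact mul_left_cancel₀ (hmu0ne ζ) (h1 ▸ h2 ▸ rfl)
  have heq2 : ∀ ζ, v ζ 2 0 = v ζ 2 2 := by
    intro ζ
    have h1 := (hE ζ 2).1
    have h2 := (hE ζ 2).2.2
    exact mul_left_cancel₀ (hmu2ne ζ) (h1 ▸ h2 ▸ rfl)
  -- column orthonormality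
  have hcol : ∀ ζ, ∀ i j : Fin 3,
      ∑ k : Fin 3, v ζ k i * v ζ k j = if i = j then 1 else 0 := by
    intro ζ i j
    set M : Matrix (Fin 3) (Fin 3) ℝ := Matrix.of (fun k x => v ζ k x) with hMdef
    have hM : M * M.transpose = 1 := by
      ext k l
      simpa [hMdef, Matrix.mul_apply, Matrix.one_apply] using horth ζ k l
    have hM2 : M.transpose * M = 1 := mul_eq_one_comm.mp hM
    have := congrFun (congrFun hM2 i) j
    simpa [hMdef, Matrix.mul_apply, Matrix.one_apply] using this
  refine ⟨?_, ?_, ?_⟩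
  · -- determinant
    intro ζ lam
    have hs := hs2 ζ
    simp [Matrix.det_fin_three, H3, Matrix.smul_apply, Matrix.one_apply, mu3, smul_eq_mul]
    linear_combination (lam/4) * hs
  · -- pmax ζ 0 2 = 1
    intro ζ
    have c00 := hcol ζ 0 0
    have c22 := hcol ζ 2 2
    have c02 := hcol ζ 0 2
    have r11 := horth ζ 1 1
    simp [Fin.sum_univ_three] at c00 c22 c02 r11
    rw [hmid ζ] at r11
    rw [← heq0 ζ, ← heq2 ζ] at c22 c02
    -- now derive v10 * v12 = -(1/2) and v00^2 + v20^2 = 1/2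
    have hprod : v ζ 1 0 * v ζ 1 2 = -(1/2) := by nlinarith
    have hA : v ζ 0 0 * v ζ 0 0 + v ζ 2 0 * v ζ 2 0 = 1/2 := by nlinarith
    rw [hpmax, Fin.sum_univ_three, ← heq0 ζ, ← heq2 ζ, hprod, abs_mul_self, abs_mul_self]
    rw [show |(-(1/2):ℝ)| = 1/2 by norm_num]
    nlinarith [hA]
  · -- tendsto
    have hbound : ∀ ζ : ℝ, 1 ≤ ζ → pmax ζ 0 1 ≤ 16 / ζ ^ 2 := by
      intro ζ hζ
      set s := Real.sqrt (ζ ^ 2 + 8) with hsdef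
      have hs := hs2 ζ
      have hsn := hsnn ζ
      have hζ0 : (0:ℝ) < ζ := by linarith
      have hsgt : ζ < s := by nlinarith
      have hεle : s - ζ ≤ 4 / ζ := by
        rw [le_div_iff₀ hζ0]
        nlinarith
      -- bounds on components
      have r00 := horth ζ 0 0
      have r22 := horth ζ 2 2
      simp [Fin.sum_univ_three] at r00 r22
      have hv00 : v ζ 0 0 * v ζ 0 0 ≤ 1 := by
        linarith [mul_self_nonneg (v ζ 0 1), mul_self_nonneg (v ζ 0 2)]
      have hv21 : v ζ 2 1 * v ζ 2 1 ≤ 1 := by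
        linarith [mul_self_nonneg (v ζ 2 0), mul_self_nonneg (v ζ 2 2)]
      -- term 0
      have e01 : v ζ 0 1 = (ζ/2 - s/2) * v ζ 0 0 := by
        have := (hE ζ 0).1; simpa [mu3, hsdef] using this
      have t0 : |v ζ 0 0 * v ζ 0 1| ≤ (s - ζ)/2 := by
        rw [e01]
        rw [show v ζ 0 0 * ((ζ/2 - s/2) * v ζ 0 0) = (ζ/2 - s/2) * (v ζ 0 0 * v ζ 0 0) by ring]
        rw [abs_mul, abs_mul_self]
        have h1 : |ζ/2 - s/2| = (s - ζ)/2 := by rw [abs_of_nonpos (by linarith)]; ring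
        rw [h1]
        nlinarith [hv00, mul_self_nonneg (v ζ 0 0)]
      -- term 1
      have t1 : |v ζ 1 0 * v ζ 1 1| = 0 := by rw [hmid ζ]; simp
      -- term 2
      have t2 : |v ζ 2 0 * v ζ 2 1| ≤ (s - ζ)/4 := by
        have hmid2 := (hE ζ 2).2.1
        have h22 := heq2 ζ
        have hmu2 : mu3 ζ 2 = ζ/2 + s/2 := by simp [mu3, hsdef]
        rw [hmu2] at hmid2
        have hv20 : v ζ 2 0 = (s - ζ)/4 * v ζ 2 1 := by
          rw [h22] at hmid2 ⊢
          linarith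
        rw [hv20, show (s - ζ)/4 * v ζ 2 1 * v ζ 2 1 = (s-ζ)/4 * (v ζ 2 1 * v ζ 2 1) by ring,
          abs_mul, abs_mul_self, abs_of_nonneg (by linarith : (0:ℝ) ≤ (s-ζ)/4)]
        nlinarith [hv21, mul_self_nonneg (v ζ 2 1)]
      rw [hpmax, Fin.sum_univ_three]
      have hsum : |v ζ 0 0 * v ζ 0 1| + |v ζ 1 0 * v ζ 1 1| + |v ζ 2 0 * v ζ 2 1| ≤ 4/ζ := by
        rw [t1]; linarith
      have hsumnn : (0:ℝ) ≤ |v ζ 0 0 * v ζ 0 1| + |v ζ 1 0 * v ζ 1 1| + |v ζ 2 0 * v ζ 2 1| := by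
        positivity
      have h4 : (0:ℝ) ≤ 4/ζ := by positivity
      calc (|v ζ 0 0 * v ζ 0 1| + |v ζ 1 0 * v ζ 1 1| + |v ζ 2 0 * v ζ 2 1|) ^ 2
          ≤ (4/ζ) ^ 2 := pow_le_pow_left₀ hsumnn hsum 2
        _ = 16 / ζ ^ 2 := by rw [div_pow]; norm_num
    have hnn : ∀ ζ : ℝ, 0 ≤ pmax ζ 0 1 := by
      intro ζ; rw [hpmax]; positivity
    have hlim : Filter.Tendsto (fun ζ : ℝ => (16:ℝ) / ζ ^ 2) Filter.atTop (nhds 0) := by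
      have h2 : Filter.Tendsto (fun x : ℝ => x ^ 2) Filter.atTop Filter.atTop :=
        Filter.tendsto_pow_atTop two_ne_zero
      simpa using tendsto_const_nhds.div_atTop h2
    exact tendsto_of_tendsto_of_tendsto_of_le_of_le' tendsto_const_nhds hlim
      (Filter.Eventually.of_forall hnn)
      (by filter_upwards [Filter.eventually_ge_atTop (1:ℝ)] with ζ hζ; exact hbound ζ hζ)
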